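/- arXiv:1401.6579 — 9 statements merged into one kernel-verified Lean document; each statement's English description precedes it below -/
import Mathlib

section
/- Let R = F_1 × ... × F_n be a finite product of finite fields with n ≥ 2, R not isomorphic to Z/2 × Z/2. In the Jacobson graph of R (vertices R \ {0}, x ~ y iff x ≠ y and 1 - x*y is not a unit), two vertices x and y have equal open neighborhoods N(x) = N(y) if and only if x = y. -/
/-- The Jacobson graph of a product of fields: vertices are the nonzero
elements, two distinct vertices are adjacent iff `1 - x*y` is not a unit. -/
def jacGraph {ι : Type*} (F : ι → Type*) [∀ i, Field (F i)] :
    SimpleGraph {x : ∀ i, F i // x ≠ 0} where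
  Adj x y := x ≠ y ∧ ¬ IsUnit (1 - (x : ∀ i, F i) * y)
  symm := by
    constructor
    rintro x y ⟨hxy, hu⟩
    exact ⟨hxy.symm, by rwa [mul_comm]⟩
  loopless := by constructor; rintro x ⟨h, _⟩; exact h rfl

lemma equivZMod2 (K : Type*) [Field K] (h : ∀ c : K, c = 0 ∨ c = 1) :
    Nonempty (K ≃+* ZMod 2) := by
  have h2 : (1 : K) + 1 = 0 := by
    rcases h (1 + 1) with h' | h'
    · exact h'
    · exact absurd (add_eq_right.mp h') one_ne_zero
  have hz : ∀ z : ZMod 2, z = 0 ∨ z = 1 := by decide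
  have h10 : (1 : ZMod 2) ≠ 0 := by decide
  classical
  refine ⟨{
    toFun := fun c => if c = 0 then 0 else 1
    invFun := fun z => if z = 0 then 0 else 1
    left_inv := ?_
    right_inv := ?_
    map_mul' := ?_
    map_add' := ?_ }⟩
  · intro c
    rcases h c with rfl | rfl
    · simp
    · simp [one_ne_zero, h10]
  · intro z
    rcases hz z with rfl | rfl
    · simp
    · simp [one_ne_zero, h10]
  · intro c d
    rcases h c with rfl | rfl <;> rcases h d with rfl | rfl <;>
      simp [one_ne_zero]
  · intro c d
    rcases h c with rfl | rfl <;> rcases h d with rfl | rfl <;>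
      simp [one_ne_zero, h2] <;> decide

lemma piTwoEquiv {n : ℕ} {F : Fin n → Type*} [∀ i, Field (F i)]
    {i k : Fin n} (hik : i ≠ k) (hall : ∀ m, m = i ∨ m = k) :
    Nonempty ((∀ j, F j) ≃+* F i × F k) := by
  refine ⟨{
    toFun := fun f => (f i, f k)
    invFun := fun p j =>
      if h : j = i then h.symm ▸ p.1 else ((hall j).resolve_left h).symm ▸ p.2
    left_inv := ?_
    right_inv := ?_
    map_mul' := fun f g => rfl
    map_add' := fun f g => rfl }⟩
  · intro f
    funext j
    by_cases h : j = i
    · subst h; simp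
    · have hk : j = k := (hall j).resolve_left h
      subst hk
      simp [h]
  · intro p
    have hki : ¬ (k = i) := fun h => hik h.symm
    ext
    · simp
    · simp [hki]

section
variable {n : ℕ} {F : Fin n → Type*} [∀ i, Field (F i)]

lemma pi_isUnit_iff (u : ∀ i, F i) : IsUnit u ↔ ∀ i, u i ≠ 0 := by
  constructor
  · rintro ⟨v, rfl⟩ i h
    have := congrFun v.mul_inv i
    rw [Pi.mul_apply] at this
    simp only [h, zero_mul, Pi.one_apply] at this
    exact zero_ne_one this
  · intro h
    exact IsUnit.of_mul_eq_one (a := u) (fun i => (u i)⁻¹)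
      (funext fun i => mul_inv_cancel₀ (h i))

lemma jac_adj (x y : {x : ∀ i, F i // x ≠ 0}) :
    (jacGraph F).Adj x y ↔ x ≠ y ∧ ∃ i, (x : ∀ i, F i) i * (y : ∀ i, F i) i = 1 := by
  show (x ≠ y ∧ ¬ IsUnit (1 - (x : ∀ i, F i) * y)) ↔ _
  rw [pi_isUnit_iff]
  push_neg
  refine and_congr_right fun _ => exists_congr fun i => ?_
  show (1 : ∀ i, F i) i - ((x : ∀ i, F i) * y) i = 0 ↔ _
  rw [Pi.one_apply, Pi.mul_apply, sub_eq_zero, eq_comm]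

lemma jac_step {x y : {x : ∀ i, F i // x ≠ 0}}
    (hN : ∀ z, (jacGraph F).Adj x z ↔ (jacGraph F).Adj y z)
    {i : Fin n} (hx : (x : ∀ i, F i) i ≠ 0)
    (hne : (y : ∀ i, F i) i ≠ (x : ∀ i, F i) i) :
    (x : ∀ i, F i) = Pi.single i ((x : ∀ i, F i) i) ∧
      (x : ∀ i, F i) i * (x : ∀ i, F i) i = 1 := by
  set a : F i := (x : ∀ i, F i) i with ha
  have hz0 : (Pi.single i a⁻¹ : ∀ i, F i) ≠ 0 := by
    intro h
    have := congrFun h i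
    rw [Pi.single_eq_same] at this
    exact inv_ne_zero hx (by simpa using this)
  set z : {x : ∀ i, F i // x ≠ 0} := ⟨Pi.single i a⁻¹, hz0⟩ with hzdef
  by_cases hzx : z = x
  · have hxs : (x : ∀ i, F i) = Pi.single i a⁻¹ := by
      rw [← hzx]
    have hainv : a = a⁻¹ := by
      conv_lhs => rw [ha, hxs]
      rw [Pi.single_eq_same]
    constructor
    · rw [hxs, ← hainv]
    · rw [show a * a = a * a⁻¹ by rw [← hainv]]
      exact mul_inv_cancel₀ hx
  · have hadj : (jacGraph F).Adj x z := by
      rw [jac_adj]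
      refine ⟨fun h => hzx h.symm, i, ?_⟩
      show a * Pi.single i a⁻¹ i = 1
      rw [Pi.single_eq_same]
      exact mul_inv_cancel₀ hx
    have hadj' := (hN z).1 hadj
    rw [jac_adj] at hadj'
    obtain ⟨-, j, hj⟩ := hadj'
    by_cases hji : j = i
    · subst hji
      rw [show ((z : ∀ i, F i) j) = a⁻¹ from Pi.single_eq_same j a⁻¹,
        mul_inv_eq_one₀ hx] at hj
      exact absurd hj hne
    · rw [show ((z : ∀ i, F i) j) = 0 from Pi.single_eq_of_ne hji a⁻¹] at hj
      simp at hj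

lemma jac_spec {x y : {x : ∀ i, F i // x ≠ 0}}
    (hN : ∀ z, (jacGraph F).Adj x z ↔ (jacGraph F).Adj y z)
    (hR : ¬ Nonempty ((∀ i, F i) ≃+* (ZMod 2 × ZMod 2)))
    {i k : Fin n} (hik : i ≠ k) {a : F i} {b : F k}
    (hxs : (x : ∀ i, F i) = Pi.single i a) (ha : a * a = 1)
    (hys : (y : ∀ i, F i) = Pi.single k b) (hb : b * b = 1) : False := by
  have ha0 : a ≠ 0 := left_ne_zero_of_mul_eq_one ha
  have hb0 : b ≠ 0 := left_ne_zero_of_mul_eq_one hb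
  have hki : k ≠ i := fun h => hik h.symm
  -- helper to build the vertex `single i a + single k c` style elements
  by_cases hm : ∃ m, m ≠ i ∧ m ≠ k
  · obtain ⟨m, hmi, hmk⟩ := hm
    set w : ∀ j, F j := Pi.single i a + Pi.single m 1 with hw
    have hwi : w i = a := by
      simp [hw, Pi.single_eq_same, Pi.single_eq_of_ne (Ne.symm hmi)]
    have hwm : w m = 1 := by
      simp [hw, Pi.single_eq_same, Pi.single_eq_of_ne hmi]
    have hwk : w k = 0 := by
      simp [hw, Pi.single_eq_of_ne hki, Pi.single_eq_of_ne (Ne.symm hmk)]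
    have hw0 : w ≠ 0 := fun h => ha0 (by rw [← hwi, h]; rfl)
    set W : {x : ∀ i, F i // x ≠ 0} := ⟨w, hw0⟩
    have hadj : (jacGraph F).Adj x W := by
      rw [jac_adj]
      refine ⟨?_, i, ?_⟩
      · intro h
        have : (x : ∀ i, F i) m = w m := by rw [h]
        rw [hxs, Pi.single_eq_of_ne hmi, hwm] at this
        exact zero_ne_one this
      · show (x : ∀ i, F i) i * w i = 1
        rw [hxs, Pi.single_eq_same, hwi]; exact ha
    have hadj' := (hN W).1 hadj
    rw [jac_adj] at hadj'
    obtain ⟨-, j, hj⟩ := hadj'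
    rw [hys] at hj
    by_cases hjk : j = k
    · subst hjk
      rw [Pi.single_eq_same] at hj
      rw [show (W : ∀ i, F i) j = 0 from hwk] at hj
      simp at hj
    · rw [Pi.single_eq_of_ne hjk] at hj
      simp at hj
  · push_neg at hm
    have hall : ∀ m, m = i ∨ m = k := by
      intro m
      by_cases h : m = i
      · exact Or.inl h
      · exact Or.inr (hm m h)
    by_cases hc : ∃ c : F k, c ≠ 0 ∧ c ≠ b
    · obtain ⟨c, hc0, hcb⟩ := hc
      set w : ∀ j, F j := Pi.single i a + Pi.single k c with hw
      have hwi : w i = a := by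
        simp [hw, Pi.single_eq_same, Pi.single_eq_of_ne hik]
      have hwk : w k = c := by
        simp [hw, Pi.single_eq_same, Pi.single_eq_of_ne hki]
      have hw0 : w ≠ 0 := fun h => ha0 (by rw [← hwi, h]; rfl)
      set W : {x : ∀ i, F i // x ≠ 0} := ⟨w, hw0⟩
      have hadj : (jacGraph F).Adj x W := by
        rw [jac_adj]
        refine ⟨?_, i, ?_⟩
        · intro h
          have : (x : ∀ i, F i) k = w k := by rw [h]
          rw [hxs, Pi.single_eq_of_ne hki, hwk] at this
          exact hc0 this.symm
        · show (x : ∀ i, F i) i * w i = 1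
          rw [hxs, Pi.single_eq_same, hwi]; exact ha
      have hadj' := (hN W).1 hadj
      rw [jac_adj] at hadj'
      obtain ⟨-, j, hj⟩ := hadj'
      rw [hys] at hj
      by_cases hjk : j = k
      · subst hjk
        rw [Pi.single_eq_same, show (W : ∀ i, F i) j = c from hwk] at hj
        exact hcb (mul_left_cancel₀ hb0 (hj.trans hb.symm))
      · rw [Pi.single_eq_of_ne hjk] at hj
        simp at hj
    · by_cases hc' : ∃ c : F i, c ≠ 0 ∧ c ≠ a
      · obtain ⟨c, hc0, hca⟩ := hc'
        set w : ∀ j, F j := Pi.single i c + Pi.single k b with hw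
        have hwi : w i = c := by
          simp [hw, Pi.single_eq_same, Pi.single_eq_of_ne hik]
        have hwk : w k = b := by
          simp [hw, Pi.single_eq_same, Pi.single_eq_of_ne hki]
        have hw0 : w ≠ 0 := fun h => hc0 (by rw [← hwi, h]; rfl)
        set W : {x : ∀ i, F i // x ≠ 0} := ⟨w, hw0⟩
        have hadj : (jacGraph F).Adj y W := by
          rw [jac_adj]
          refine ⟨?_, k, ?_⟩
          · intro h
            have : (y : ∀ i, F i) i = w i := by rw [h]
            rw [hys, Pi.single_eq_of_ne hik, hwi] at this
            exact hc0 this.symm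
          · show (y : ∀ i, F i) k * w k = 1
            rw [hys, Pi.single_eq_same, hwk]; exact hb
        have hadj' := (hN W).2 hadj
        rw [jac_adj] at hadj'
        obtain ⟨-, j, hj⟩ := hadj'
        rw [hxs] at hj
        by_cases hji : j = i
        · subst hji
          rw [Pi.single_eq_same, show (W : ∀ i, F i) j = c from hwi] at hj
          exact hca (mul_left_cancel₀ ha0 (hj.trans ha.symm))
        · rw [Pi.single_eq_of_ne hji] at hj
          simp at hj
      · push_neg at hc hc'
        have haone : a = 1 := ((hc' 1 one_ne_zero)).symm
        have hbone : b = 1 := ((hc 1 one_ne_zero)).symm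
        have hKi : ∀ c : F i, c = 0 ∨ c = 1 := by
          intro c
          by_cases h : c = 0
          · exact Or.inl h
          · exact Or.inr ((hc' c h).trans haone)
        have hKk : ∀ c : F k, c = 0 ∨ c = 1 := by
          intro c
          by_cases h : c = 0
          · exact Or.inl h
          · exact Or.inr ((hc c h).trans hbone)
        obtain ⟨e⟩ := piTwoEquiv (F := F) hik hall
        obtain ⟨e1⟩ := equivZMod2 (F i) hKi
        obtain ⟨e2⟩ := equivZMod2 (F k) hKk
        exact hR ⟨e.trans (RingEquiv.prodCongr e1 e2)⟩

end

theorem jacGraph_neighborSet_eq_iff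
    {n : ℕ} (F : Fin n → Type*) [∀ i, Field (F i)] [∀ i, Fintype (F i)]
    (hn : 2 ≤ n)
    (hR : ¬ Nonempty ((∀ i, F i) ≃+* (ZMod 2 × ZMod 2)))
    (x y : {x : ∀ i, F i // x ≠ 0}) :
    (jacGraph F).neighborSet x = (jacGraph F).neighborSet y ↔ x = y := by
  constructor
  · intro h
    have hN : ∀ z, (jacGraph F).Adj x z ↔ (jacGraph F).Adj y z := by
      intro z
      have := Set.ext_iff.mp h z
      simpa [SimpleGraph.mem_neighborSet] using this
    have hN' : ∀ z, (jacGraph F).Adj y z ↔ (jacGraph F).Adj x z :=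
      fun z => (hN z).symm
    by_contra hxy
    obtain ⟨i, hi⟩ : ∃ i, (x : ∀ i, F i) i ≠ (y : ∀ i, F i) i := by
      by_contra h'
      push_neg at h'
      exact hxy (Subtype.ext (funext h'))
    by_cases hx0 : (x : ∀ i, F i) i = 0
    · by_cases hy0 : (y : ∀ i, F i) i = 0
      · exact hi (hx0.trans hy0.symm)
      · obtain ⟨hys, hb⟩ := jac_step hN' hy0 hi
        obtain ⟨k, hk⟩ : ∃ k, (x : ∀ i, F i) k ≠ 0 := by
          by_contra h'
          push_neg at h'
          exact x.2 (funext h')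
        have hki : k ≠ i := by rintro rfl; exact hk hx0
        have hne : (y : ∀ i, F i) k ≠ (x : ∀ i, F i) k := by
          rw [hys, Pi.single_eq_of_ne hki]
          exact fun h => hk h.symm
        obtain ⟨hxs, ha⟩ := jac_step hN hk hne
        exact jac_spec hN hR hki hxs ha hys hb
    · by_cases hy0 : (y : ∀ i, F i) i = 0
      · obtain ⟨hxs, ha⟩ := jac_step hN hx0 (Ne.symm hi)
        obtain ⟨k, hk⟩ : ∃ k, (y : ∀ i, F i) k ≠ 0 := by
          by_contra h'
          push_neg at h'
          exact y.2 (funext h')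
        have hki : k ≠ i := by rintro rfl; exact hk hy0
        have hik : i ≠ k := fun h => hki h.symm
        have hne : (x : ∀ i, F i) k ≠ (y : ∀ i, F i) k := by
          rw [hxs, Pi.single_eq_of_ne hki]
          exact fun h => hk h.symm
        obtain ⟨hys, hb⟩ := jac_step hN' hk hne
        exact jac_spec hN hR hik hxs ha hys hb
      · obtain ⟨hxs, ha⟩ := jac_step hN hx0 (Ne.symm hi)
        obtain ⟨hys, hb⟩ := jac_step hN' hy0 hi
        set a : F i := (x : ∀ i, F i) i with haa
        set b : F i := (y : ∀ i, F i) i with hbb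
        have : Nontrivial (Fin n) := Fin.nontrivial_iff_two_le.mpr hn
        obtain ⟨k, hki⟩ := exists_ne i
        set w : ∀ j, F j := Pi.single i a + Pi.single k 1 with hw
        have hwi : w i = a := by
          simp [hw, Pi.single_eq_same, Pi.single_eq_of_ne (Ne.symm hki)]
        have hwk : w k = 1 := by
          simp [hw, Pi.single_eq_same, Pi.single_eq_of_ne hki]
        have hw0 : w ≠ 0 := fun h => hx0 (by rw [← hwi, h]; rfl)
        set W : {x : ∀ i, F i // x ≠ 0} := ⟨w, hw0⟩
        have hadj : (jacGraph F).Adj x W := by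
          rw [jac_adj]
          refine ⟨?_, i, ?_⟩
          · intro h
            have : (x : ∀ i, F i) k = w k := by rw [h]
            rw [hxs, Pi.single_eq_of_ne hki, hwk] at this
            exact zero_ne_one this
          · show (x : ∀ i, F i) i * w i = 1
            rw [hwi]; exact ha
        have hadj' := (hN W).1 hadj
        rw [jac_adj] at hadj'
        obtain ⟨-, j, hj⟩ := hadj'
        rw [hys] at hj
        by_cases hji : j = i
        · subst hji
          rw [Pi.single_eq_same, show (W : ∀ i, F i) j = a from hwi] at hj
          exact hi (mul_right_cancel₀ hx0 (ha.trans hj.symm))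
        · rw [Pi.single_eq_of_ne hji] at hj
          simp at hj
  · rintro rfl; rfl
end

section
/- Let R = F_1 × ... × F_n be a finite product of finite fields with n ≥ 2. In the Jacobson graph of R, two vertices x and y have equal closed neighborhoods N[x] = N[y] if and only if x = y. -/
private lemma piIsUnit {n : ℕ} (F : Fin n → Type*) [∀ i, Field (F i)] (u : ∀ i, F i) :
    IsUnit u ↔ ∀ i, u i ≠ 0 := by
  constructor
  · exact fun h i => (h.map (Pi.evalRingHom F i)).ne_zero
  · intro h
    exact IsUnit.of_mul_eq_one (a := u) (fun i => (u i)⁻¹)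
      (funext fun i => by simp [mul_inv_cancel₀ (h i)])

private lemma memClosed {n : ℕ} (F : Fin n → Type*) [∀ i, Field (F i)]
    (x z : {x : ∀ i, F i // x ≠ 0}) :
    z ∈ insert x ((jacGraph F).neighborSet x) ↔
      z = x ∨ ∃ i, (x : ∀ i, F i) i * (z : ∀ i, F i) i = 1 := by
  simp only [Set.mem_insert_iff, SimpleGraph.mem_neighborSet, jacGraph, piIsUnit]
  constructor
  · rintro (h | ⟨hne, h⟩)
    · exact Or.inl h
    · right
      push_neg at h
      obtain ⟨i, hi⟩ := h
      simp only [Pi.sub_apply, Pi.mul_apply, Pi.one_apply, sub_eq_zero] at hi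
      exact ⟨i, hi.symm⟩
  · rintro (h | ⟨i, hi⟩)
    · exact Or.inl h
    · by_cases hzx : z = x
      · exact Or.inl hzx
      · refine Or.inr ⟨Ne.symm hzx, ?_⟩
        push_neg
        exact ⟨i, by simp [sub_eq_zero, hi]⟩

private lemma auxFalse {n : ℕ} (F : Fin n → Type*) [∀ i, Field (F i)] (hn : 2 ≤ n)
    (x y : {x : ∀ i, F i // x ≠ 0})
    (h : ∀ z : {x : ∀ i, F i // x ≠ 0},
      (z = x ∨ ∃ i, (x : ∀ i, F i) i * (z : ∀ i, F i) i = 1) ↔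
      (z = y ∨ ∃ i, (y : ∀ i, F i) i * (z : ∀ i, F i) i = 1))
    (j : Fin n) (hxj : (x : ∀ i, F i) j ≠ 0)
    (hne : (x : ∀ i, F i) j ≠ (y : ∀ i, F i) j) : False := by
  set a := (x : ∀ i, F i) j with ha
  have hxy : x ≠ y := fun e => hne (by rw [ha]; exact congrFun (congrArg Subtype.val e) j)
  have hx : ∃ i, (y : ∀ i, F i) i * (x : ∀ i, F i) i = 1 := by
    rcases (h x).mp (Or.inl rfl) with e | e
    · exact absurd e hxy
    · exact e
  obtain ⟨i, hi⟩ := hx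
  have hainv : a⁻¹ ≠ 0 := inv_ne_zero hxj
  have hz0 : (Pi.single j a⁻¹ : ∀ i, F i) ≠ 0 := fun e => hainv (by simpa using congrFun e j)
  set z : {x : ∀ i, F i // x ≠ 0} := ⟨Pi.single j a⁻¹, hz0⟩ with hzdef
  by_cases hzx : z = x
  · -- x = single j a⁻¹ ⇒ a = a⁻¹, x vanishes off j, so i = j and y_j = a
    have hfun : (Pi.single j a⁻¹ : ∀ i, F i) = (x : ∀ i, F i) := congrArg Subtype.val hzx
    have haa : a = a⁻¹ := by
      have := congrFun hfun j; simpa [ha] using this.symm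
    have hij : i = j := by
      by_contra hij
      have : (x : ∀ i, F i) i = 0 := by
        have := congrFun hfun i; simpa [Pi.single_eq_of_ne hij] using this.symm
      rw [this, mul_zero] at hi; exact zero_ne_one hi
    subst hij
    have haa1 : a * a = 1 := by nth_rewrite 2 [haa]; exact mul_inv_cancel₀ hxj
    have hya : (y : ∀ i, F i) i = a := by
      calc (y : ∀ i, F i) i = (y : ∀ i, F i) i * (a * a) := by rw [haa1, mul_one]
        _ = ((y : ∀ i, F i) i * a) * a := by ring
        _ = a := by rw [← ha] at hi; rw [hi, one_mul]
    exact hne hya.symm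
  · have hz : z = y ∨ ∃ m, (y : ∀ i, F i) m * (z : ∀ i, F i) m = 1 :=
      (h z).mp (Or.inr ⟨j, by simp [hzdef, mul_inv_cancel₀ hxj]; exact mul_inv_cancel₀ hxj⟩)
    rcases hz with hzy | ⟨m, hm⟩
    · -- y = single j a⁻¹
      have hfun : (Pi.single j a⁻¹ : ∀ i, F i) = (y : ∀ i, F i) := congrArg Subtype.val hzy
      have hyj : (y : ∀ i, F i) j = a⁻¹ := (congrFun hfun j).symm.trans (Pi.single_eq_same j a⁻¹)
      have haa : a * a ≠ 1 := fun e => hne (by rw [hyj]; exact eq_inv_of_mul_eq_one_left e)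
      have hw0 : (Pi.single j a : ∀ i, F i) ≠ 0 := fun e => hxj (by simpa using congrFun e j)
      set w : {x : ∀ i, F i // x ≠ 0} := ⟨Pi.single j a, hw0⟩ with hwdef
      have hwy : w = x ∨ ∃ m, (x : ∀ i, F i) m * (w : ∀ i, F i) m = 1 :=
        (h w).mpr (Or.inr ⟨j, by simp [hwdef, hyj, inv_mul_cancel₀ hxj]⟩)
      rcases hwy with hwx | ⟨m, hm⟩
      · -- x = single j a ; use third vector u
        have hfunx : (Pi.single j a : ∀ i, F i) = (x : ∀ i, F i) := congrArg Subtype.val hwx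
        obtain ⟨k, hk⟩ : ∃ k : Fin n, k ≠ j := by
          by_cases hj0 : (j : ℕ) = 0
          · exact ⟨⟨1, by omega⟩, by simp [Fin.ext_iff, hj0]⟩
          · exact ⟨⟨0, by omega⟩, by simp [Fin.ext_iff]; omega⟩
        have hu0 : (Pi.single j a⁻¹ + Pi.single k 1 : ∀ i, F i) ≠ 0 := fun e =>
          one_ne_zero (α := F k) (by simpa [Pi.single_eq_of_ne hk] using congrFun e k)
        set u : {x : ∀ i, F i // x ≠ 0} := ⟨Pi.single j a⁻¹ + Pi.single k 1, hu0⟩ with hudef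
        have hu : u = y ∨ ∃ m, (y : ∀ i, F i) m * (u : ∀ i, F i) m = 1 :=
          (h u).mp (Or.inr ⟨j, by
            simp [hudef, Pi.single_eq_of_ne (Ne.symm hk), mul_inv_cancel₀ hxj]; exact mul_inv_cancel₀ hxj⟩)
        rcases hu with huy | ⟨m, hm⟩
        · have hfy : (Pi.single j a⁻¹ + Pi.single k 1 : ∀ i, F i) = (y : ∀ i, F i) :=
            congrArg Subtype.val huy
          have hyk : (y : ∀ i, F i) k = 0 := by
            have := congrFun hfun k; simpa [Pi.single_eq_of_ne hk] using this.symm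
          have : (1 : F k) = 0 := by
            have := congrFun hfy k
            simpa [Pi.single_eq_of_ne hk, hyk] using this
          exact one_ne_zero this
        · by_cases hmj : m = j
          · subst hmj
            rw [hyj] at hm
            have h1 : a⁻¹ * (a⁻¹ + 0) = 1 := by
              simpa [hudef, Pi.single_eq_of_ne (Ne.symm hk)] using hm
            rw [add_zero] at h1
            have h2 : a * a * (a⁻¹ * a⁻¹) = a * a * 1 := by rw [h1]
            field_simp at h2
            exact haa (by rw [← pow_two]; exact h2.symm)
          · have hym : (y : ∀ i, F i) m = 0 := by
              have := congrFun hfun m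
              simpa [Pi.single_eq_of_ne hmj] using this.symm
            rw [hym, zero_mul] at hm; exact zero_ne_one hm
      · by_cases hmj : m = j
        · subst hmj
          have : a * a = 1 := by simpa [hwdef, ← ha] using hm
          exact haa this
        · have : (x : ∀ i, F i) m * 0 = 1 := by
            simpa [hwdef, Pi.single_eq_of_ne hmj] using hm
          rw [mul_zero] at this; exact zero_ne_one this
    · by_cases hmj : m = j
      · subst hmj
        have h1 : (y : ∀ i, F i) m * a⁻¹ = 1 := by simpa [hzdef] using hm
        apply hne
        rw [ha]
        field_simp at h1
        exact h1.symm
      · have : (y : ∀ i, F i) m * 0 = 1 := by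
          simpa [hzdef, Pi.single_eq_of_ne hmj] using hm
        rw [mul_zero] at this; exact zero_ne_one this

theorem jacGraph_closedNeighborSet_eq_iff
    {n : ℕ} (F : Fin n → Type*) [∀ i, Field (F i)] [∀ i, Fintype (F i)]
    (hn : 2 ≤ n)
    (x y : {x : ∀ i, F i // x ≠ 0}) :
    insert x ((jacGraph F).neighborSet x) = insert y ((jacGraph F).neighborSet y) ↔
      x = y := by
  constructor
  · intro hset
    have h : ∀ z : {x : ∀ i, F i // x ≠ 0},
        (z = x ∨ ∃ i, (x : ∀ i, F i) i * (z : ∀ i, F i) i = 1) ↔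
        (z = y ∨ ∃ i, (y : ∀ i, F i) i * (z : ∀ i, F i) i = 1) := by
      intro z
      rw [← memClosed, ← memClosed, hset]
    by_contra hxy
    obtain ⟨j, hj⟩ : ∃ j, (x : ∀ i, F i) j ≠ (y : ∀ i, F i) j := by
      by_contra hall
      push_neg at hall
      exact hxy (Subtype.ext (funext hall))
    by_cases hxj : (x : ∀ i, F i) j ≠ 0
    · exact auxFalse F hn x y h j hxj hj
    · push_neg at hxj
      have hyj : (y : ∀ i, F i) j ≠ 0 := fun e => hj (by rw [hxj, e])
      exact auxFalse F hn y x (fun z => (h z).symm) j hyj hj.symm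
  · rintro rfl; rfl
end

section
/- Let R = F_1 × ... × F_n be a finite product of finite fields with |F_1| ≥ ... ≥ |F_n| and |F_1| > 3. Then the minimum vertex degree of the Jacobson graph of R equals |R|/|F_1| - 1, attained at the vertex e_1. -/
lemma jacGraph_adj_iff {ι : Type*} [Fintype ι] (F : ι → Type*) [∀ i, Field (F i)]
    (x y : {x : ∀ i, F i // x ≠ 0}) :
    (jacGraph F).Adj x y ↔ x ≠ y ∧ ∃ i, (x : ∀ i, F i) i * (y : ∀ i, F i) i = 1 := by
  show (x ≠ y ∧ ¬ IsUnit (1 - (x : ∀ i, F i) * y)) ↔ _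
  refine and_congr_right fun _ => ⟨fun hu => ?_, ?_⟩
  · by_contra h
    push_neg at h
    apply hu
    refine IsUnit.of_mul_eq_one (fun i => (1 - (x : ∀ i, F i) i * (y : ∀ i, F i) i)⁻¹) ?_
    funext i
    have : (1 - (x : ∀ i, F i) * y) i = 1 - (x : ∀ i, F i) i * (y : ∀ i, F i) i := rfl
    rw [Pi.mul_apply, this, Pi.one_apply,
      mul_inv_cancel₀ (sub_ne_zero.mpr fun hh => h i hh.symm)]
  · rintro ⟨i, hi⟩ hu
    have h2 := hu.map (Pi.evalMonoidHom F i)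
    have h3 : (Pi.evalMonoidHom F i) (1 - (x : ∀ i, F i) * y)
        = 1 - (x : ∀ i, F i) i * (y : ∀ i, F i) i := rfl
    rw [h3, hi, sub_self] at h2
    exact zero_ne_one (isUnit_zero_iff.mp h2)

lemma card_fiber {ι : Type*} [Fintype ι] [DecidableEq ι] (F : ι → Type*)
    [∀ i, Field (F i)] [∀ i, Fintype (F i)] (j : ι) (c : F j) (hc : c ≠ 0) :
    ({y : {x : ∀ i, F i // x ≠ 0} | (y : ∀ i, F i) j = c}).ncard
      = Fintype.card (∀ i, F i) / Fintype.card (F j) := by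
  have e1 : {y : {x : ∀ i, F i // x ≠ 0} | (y : ∀ i, F i) j = c}
      ≃ {f : ∀ i, F i // f j = c} :=
    { toFun := fun y => ⟨y.1.1, y.2⟩
      invFun := fun f => ⟨⟨f.1, fun h => hc (by rw [← f.2, h]; rfl)⟩, f.2⟩
      left_inv := fun _ => rfl
      right_inv := fun _ => rfl }
  have e2 : {f : ∀ i, F i // f j = c}
      ≃ {p : F j × (∀ i : {i // i ≠ j}, F i) // p.1 = c} :=
    (Equiv.piSplitAt j F).subtypeEquiv fun f => Iff.rfl
  have e3 : {p : F j × (∀ i : {i // i ≠ j}, F i) // p.1 = c}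
      ≃ (∀ i : {i // i ≠ j}, F i) :=
    { toFun := fun p => p.1.2
      invFun := fun g => ⟨(c, g), rfl⟩
      left_inv := by rintro ⟨⟨a, b⟩, h⟩; subst h; rfl
      right_inv := fun _ => rfl }
  have hN : Fintype.card (∀ i, F i)
      = Fintype.card (F j) * Fintype.card (∀ i : {i // i ≠ j}, F i) := by
    rw [Fintype.card_congr (Equiv.piSplitAt j F), Fintype.card_prod]
  rw [← Nat.card_coe_set_eq, Nat.card_congr (e1.trans (e2.trans e3)),
    Nat.card_eq_fintype_card, hN, Nat.mul_div_cancel_left _ Fintype.card_pos]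

theorem jacGraph_minDegree
    {ι : Type*} [Fintype ι] [DecidableEq ι] (F : ι → Type*)
    [∀ i, Field (F i)] [∀ i, Fintype (F i)]
    (i₀ : ι) (hmax : ∀ i, Fintype.card (F i) ≤ Fintype.card (F i₀))
    (hbig : 3 < Fintype.card (F i₀))
    (e : {x : ∀ i, F i // x ≠ 0}) (he : (e : ∀ i, F i) = Pi.single i₀ 1) :
    ((jacGraph F).neighborSet e).ncard =
        Fintype.card (∀ i, F i) / Fintype.card (F i₀) - 1 ∧
      ∀ v : {x : ∀ i, F i // x ≠ 0},
        ((jacGraph F).neighborSet e).ncard ≤ ((jacGraph F).neighborSet v).ncard := by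
  have hset : (jacGraph F).neighborSet e
      = {y : {x : ∀ i, F i // x ≠ 0} | (y : ∀ i, F i) i₀ = 1} \ {e} := by
    ext y
    simp only [SimpleGraph.mem_neighborSet, jacGraph_adj_iff, he, Set.mem_diff,
      Set.mem_setOf_eq, Set.mem_singleton_iff]
    constructor
    · rintro ⟨hne, i, hi⟩
      rcases eq_or_ne i i₀ with rfl | h
      · rw [Pi.single_eq_same] at hi
        exact ⟨by rwa [one_mul] at hi, hne.symm⟩
      · rw [Pi.single_eq_of_ne h, zero_mul] at hi
        exact absurd hi zero_ne_one
    · rintro ⟨h1, hne⟩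
      exact ⟨Ne.symm hne, i₀, by rw [Pi.single_eq_same, one_mul, h1]⟩
  have hmem : e ∈ {y : {x : ∀ i, F i // x ≠ 0} | (y : ∀ i, F i) i₀ = 1} := by
    show (e : ∀ i, F i) i₀ = 1
    rw [he, Pi.single_eq_same]
  have hdeg : ((jacGraph F).neighborSet e).ncard
      = Fintype.card (∀ i, F i) / Fintype.card (F i₀) - 1 := by
    rw [hset, Set.ncard_diff_singleton_of_mem hmem, card_fiber F i₀ 1 one_ne_zero]
  refine ⟨hdeg, fun v => ?_⟩
  obtain ⟨j, hvj⟩ : ∃ j, (v : ∀ i, F i) j ≠ 0 := by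
    by_contra h
    push_neg at h
    exact v.2 (funext h)
  set c : F j := ((v : ∀ i, F i) j)⁻¹ with hcdef
  have hc : c ≠ 0 := inv_ne_zero hvj
  have hsub : {y : {x : ∀ i, F i // x ≠ 0} | (y : ∀ i, F i) j = c} \ {v}
      ⊆ (jacGraph F).neighborSet v := by
    rintro y ⟨hy, hyv⟩
    rw [SimpleGraph.mem_neighborSet, jacGraph_adj_iff]
    refine ⟨fun h => hyv h.symm, j, ?_⟩
    rw [hy, mul_inv_cancel₀ hvj]
  have hfin : ((jacGraph F).neighborSet v).Finite := Set.toFinite _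
  have h1 : ({y : {x : ∀ i, F i // x ≠ 0} | (y : ∀ i, F i) j = c}).ncard - 1
      ≤ (({y : {x : ∀ i, F i // x ≠ 0} | (y : ∀ i, F i) j = c}) \ {v}).ncard := by
    by_cases hv : v ∈ {y : {x : ∀ i, F i // x ≠ 0} | (y : ∀ i, F i) j = c}
    · rw [Set.ncard_diff_singleton_of_mem hv]
    · rw [Set.diff_singleton_eq_self hv]
      exact Nat.sub_le _ _
  have h2 := Set.ncard_le_ncard hsub hfin
  rw [card_fiber F j c hc] at h1
  have h3 : Fintype.card (∀ i, F i) / Fintype.card (F i₀)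
      ≤ Fintype.card (∀ i, F i) / Fintype.card (F j) :=
    Nat.div_le_div_left (hmax j) Fintype.card_pos
  rw [hdeg]
  omega
end

section
/- The rings Z/4Z and F_2[x]/(x²) are non-isomorphic but have isomorphic Jacobson graphs. -/
/-- The Jacobson graph of a commutative ring: vertices are the elements
outside the Jacobson radical, two distinct vertices are adjacent iff
`1 - x*y` is not a unit. -/
def jacobsonGraph (R : Type*) [CommRing R] :
    SimpleGraph {x : R // x ∉ Ideal.jacobson (⊥ : Ideal R)} where
  Adj x y := x ≠ y ∧ ¬ IsUnit (1 - (x : R) * y)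
  symm := ⟨by
    rintro x y ⟨hxy, hu⟩
    exact ⟨hxy.symm, by rwa [mul_comm]⟩⟩
  loopless := ⟨by rintro x ⟨h, _⟩; exact h rfl⟩

open Polynomial

abbrev Q2 := Polynomial (ZMod 2) ⧸ Ideal.span {(Polynomial.X : Polynomial (ZMod 2)) ^ 2}

noncomputable def ξ : Q2 := Ideal.Quotient.mk _ Polynomial.X

lemma xi_sq : ξ * ξ = 0 := by
  rw [ξ, ← map_mul, ← sq, Ideal.Quotient.eq_zero_iff_mem]
  exact Ideal.subset_span rfl

lemma two_Q2 : (2 : Q2) = 0 := by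
  have h : (2 : Q2) = algebraMap (ZMod 2) Q2 2 := by rw [map_ofNat]
  rw [h, show (2 : ZMod 2) = 0 from rfl, map_zero]

lemma xi_ne_zero : ξ ≠ 0 := by
  rw [ξ, Ne, Ideal.Quotient.eq_zero_iff_mem, Ideal.mem_span_singleton,
    Polynomial.X_pow_dvd_iff]
  intro h
  simpa using h 1 one_lt_two

instance : Nontrivial Q2 := nontrivial_of_ne ξ 0 xi_ne_zero

lemma Q2_classify (z : Q2) : z = 0 ∨ z = 1 ∨ z = ξ ∨ z = 1 + ξ := by
  obtain ⟨p, rfl⟩ := Ideal.Quotient.mk_surjective z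
  have hp : (Ideal.Quotient.mk _ p : Q2)
      = Ideal.Quotient.mk _ (C (p.coeff 0) + C (p.coeff 1) * X) := by
    rw [Ideal.Quotient.eq, Ideal.mem_span_singleton, Polynomial.X_pow_dvd_iff]
    intro d hd
    interval_cases d <;> simp
  have hcl : ∀ a : ZMod 2, a = 0 ∨ a = 1 := by decide
  rw [hp, map_add, map_mul, ← ξ]
  rcases hcl (p.coeff 0) with h0 | h0 <;> rcases hcl (p.coeff 1) with h1 | h1 <;> rw [h0, h1] <;>
    simp only [Polynomial.C_0, Polynomial.C_1, map_zero, map_one, zero_mul, one_mul, add_zero,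
      zero_add] <;> tauto

lemma isUnit_one_add_xi : IsUnit (1 + ξ) := by
  refine IsUnit.of_mul_eq_one (1 + ξ) ?_
  linear_combination xi_sq + ξ * two_Q2

lemma not_isUnit_xi : ¬ IsUnit ξ := by
  intro h
  obtain ⟨b, hb⟩ := isUnit_iff_exists_inv.mp h
  have h1 : (0 : Q2) = 1 := by linear_combination (ξ * b + 1) * hb - b * b * xi_sq
  exact zero_ne_one h1

lemma Q2_mem_jac (x : Q2) :
    x ∈ Ideal.jacobson (⊥ : Ideal Q2) ↔ (x = 0 ∨ x = ξ) := by
  constructor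
  · intro h
    rcases Q2_classify x with h0 | h0 | h0 | h0
    · exact Or.inl h0
    · exfalso
      have := Ideal.mem_jacobson_bot.mp h 1
      rw [h0, mul_one, show (1 : Q2) + 1 = 0 by linear_combination two_Q2] at this
      exact not_isUnit_zero this
    · exact Or.inr h0
    · exfalso
      have := Ideal.mem_jacobson_bot.mp h 1
      rw [h0, mul_one, show (1 : Q2) + ξ + 1 = ξ by linear_combination two_Q2] at this
      exact not_isUnit_xi this
  · rintro (rfl | rfl) <;> rw [Ideal.mem_jacobson_bot] <;> intro y
    · simpa using isUnit_one
    · rcases Q2_classify y with h0 | h0 | h0 | h0 <;> subst h0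
      · simpa using isUnit_one
      · rw [mul_one, add_comm]; exact isUnit_one_add_xi
      · rw [show ξ * ξ + 1 = 1 by linear_combination xi_sq]; exact isUnit_one
      · rw [show ξ * (1 + ξ) + 1 = 1 + ξ by linear_combination xi_sq]
        exact isUnit_one_add_xi

lemma Q2_adj (x y : Q2) (hx : x ∉ Ideal.jacobson (⊥ : Ideal Q2))
    (hy : y ∉ Ideal.jacobson (⊥ : Ideal Q2)) : ¬ IsUnit (1 - x * y) := by
  have hx' : x = 1 ∨ x = 1 + ξ := by
    rcases Q2_classify x with h | h | h | h
    · exact absurd ((Q2_mem_jac x).mpr (Or.inl h)) hx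
    · exact Or.inl h
    · exact absurd ((Q2_mem_jac x).mpr (Or.inr h)) hx
    · exact Or.inr h
  have hy' : y = 1 ∨ y = 1 + ξ := by
    rcases Q2_classify y with h | h | h | h
    · exact absurd ((Q2_mem_jac y).mpr (Or.inl h)) hy
    · exact Or.inl h
    · exact absurd ((Q2_mem_jac y).mpr (Or.inr h)) hy
    · exact Or.inr h
  rcases hx' with rfl | rfl <;> rcases hy' with rfl | rfl
  · rw [show (1 : Q2) - 1 * 1 = 0 by ring]; exact not_isUnit_zero
  · rw [show (1 : Q2) - 1 * (1 + ξ) = ξ by linear_combination -ξ * two_Q2]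
    exact not_isUnit_xi
  · rw [show (1 : Q2) - (1 + ξ) * 1 = ξ by linear_combination -ξ * two_Q2]
    exact not_isUnit_xi
  · rw [show (1 : Q2) - (1 + ξ) * (1 + ξ) = 0 by linear_combination -xi_sq - ξ * two_Q2]
    exact not_isUnit_zero

lemma zmod4_mem_jac (x : ZMod 4) :
    x ∈ Ideal.jacobson (⊥ : Ideal (ZMod 4)) ↔ (x = 0 ∨ x = 2) := by
  simp only [Ideal.mem_jacobson_bot, isUnit_iff_exists_inv]
  revert x; decide

lemma zmod4_adj (x y : ZMod 4) (hx : x ∉ Ideal.jacobson (⊥ : Ideal (ZMod 4)))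
    (hy : y ∉ Ideal.jacobson (⊥ : Ideal (ZMod 4))) : ¬ IsUnit (1 - x * y) := by
  rw [zmod4_mem_jac] at hx hy
  rw [isUnit_iff_exists_inv]
  revert hx hy; revert x y; decide

theorem zmod4_polyQuot_jacobsonGraph :
    ¬ Nonempty (ZMod 4 ≃+*
        (Polynomial (ZMod 2) ⧸ Ideal.span {(Polynomial.X : Polynomial (ZMod 2)) ^ 2})) ∧
      Nonempty (jacobsonGraph (ZMod 4) ≃g
        jacobsonGraph
          (Polynomial (ZMod 2) ⧸ Ideal.span {(Polynomial.X : Polynomial (ZMod 2)) ^ 2})) := by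
  constructor
  · rintro ⟨f⟩
    have h2 : f 2 = 0 := by rw [map_ofNat, two_Q2]
    have : (2 : ZMod 4) = 0 := f.injective (by rw [h2, map_zero])
    exact absurd this (by decide)
  · classical
    have h1Z : (1 : ZMod 4) ∉ Ideal.jacobson (⊥ : Ideal (ZMod 4)) := by
      rw [zmod4_mem_jac]; decide
    have h3Z : (3 : ZMod 4) ∉ Ideal.jacobson (⊥ : Ideal (ZMod 4)) := by
      rw [zmod4_mem_jac]; decide
    have h1Q : (1 : Q2) ∉ Ideal.jacobson (⊥ : Ideal Q2) := by
      rw [Q2_mem_jac]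
      rintro (h | h)
      · exact one_ne_zero h
      · exact not_isUnit_xi (by rw [← h]; exact isUnit_one)
    have h2Q : (1 + ξ : Q2) ∉ Ideal.jacobson (⊥ : Ideal Q2) := by
      rw [Q2_mem_jac]
      rintro (h | h)
      · exact isUnit_one_add_xi.ne_zero h
      · exact not_isUnit_xi (by rw [← h]; exact isUnit_one_add_xi)
    have hne : (1 + ξ : Q2) ≠ 1 := fun h => xi_ne_zero (by linear_combination h)
    refine ⟨⟨⟨fun v => if v.1 = 1 then ⟨1, h1Q⟩ else ⟨1 + ξ, h2Q⟩,
      fun w => if w.1 = 1 then ⟨1, h1Z⟩ else ⟨3, h3Z⟩, ?_, ?_⟩, ?_⟩⟩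
    · rintro ⟨x, hx⟩
      have hx' : x = 1 ∨ x = 3 := by
        rw [zmod4_mem_jac] at hx
        revert hx; revert x; decide
      rcases hx' with rfl | rfl
      · simp
      · dsimp only
        rw [if_neg (by decide : ¬ (3 : ZMod 4) = 1), if_neg hne]
    · rintro ⟨x, hx⟩
      have hx' : x = 1 ∨ x = 1 + ξ := by
        rcases Q2_classify x with h | h | h | h
        · exact absurd ((Q2_mem_jac x).mpr (Or.inl h)) hx
        · exact Or.inl h
        · exact absurd ((Q2_mem_jac x).mpr (Or.inr h)) hx
        · exact Or.inr h
      rcases hx' with rfl | rfl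
      · simp
      · dsimp only
        rw [if_neg hne, if_neg (by decide : ¬ (3 : ZMod 4) = 1)]
    · intro a b
      show (jacobsonGraph Q2).Adj _ _ ↔ (jacobsonGraph (ZMod 4)).Adj a b
      have hQ : ∀ u v : {x : Q2 // x ∉ Ideal.jacobson (⊥ : Ideal Q2)},
          (jacobsonGraph Q2).Adj u v ↔ u ≠ v :=
        fun u v => ⟨fun h => h.1, fun h => ⟨h, Q2_adj _ _ u.2 v.2⟩⟩
      have hZ : ∀ u v : {x : ZMod 4 // x ∉ Ideal.jacobson (⊥ : Ideal (ZMod 4))},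
          (jacobsonGraph (ZMod 4)).Adj u v ↔ u ≠ v :=
        fun u v => ⟨fun h => h.1, fun h => ⟨h, zmod4_adj _ _ u.2 v.2⟩⟩
      rw [hQ, hZ]
      exact (EmbeddingLike.apply_eq_iff_eq _).not
end

section
/- If p is the largest prime not exceeding n (n ≥ 2), then the exponent of p in n! is exactly 1. -/
/-- If `p` is the largest prime not exceeding `n` (with `n ≥ 2`), then `p`
divides `n!` exactly once. -/
theorem factorization_factorial_largest_prime (p n : ℕ) (hn : 2 ≤ n)
    (hp : p.Prime) (hpn : p ≤ n)
    (hmax : ∀ q : ℕ, q.Prime → q ≤ n → q ≤ p) :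
    (Nat.factorial n).factorization p = 1 := by
  -- First, `n < 2 * p` by Bertrand's postulate and maximality of `p`.
  have h2p : n < 2 * p := by
    by_contra h
    push_neg at h
    obtain ⟨q, hq, hpq, hq2⟩ := Nat.bertrand p hp.pos.ne'
    exact absurd (hmax q hq (hq2.trans h)) (not_le.mpr hpq)
  have hppos : 0 < p := hp.pos
  have hnp2 : n < p ^ 2 := by
    calc n < 2 * p := h2p
    _ ≤ p * p := by nlinarith [hp.two_le]
    _ = p ^ 2 := (sq p).symm
  have hlog : Nat.log p n < 2 := Nat.log_lt_of_lt_pow (by omega) hnp2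
  haveI : Fact p.Prime := ⟨hp⟩
  rw [Nat.factorization_def _ hp, padicValNat_factorial hlog]
  have h1 : n / p = 1 := Nat.div_eq_of_lt_le (by simpa using hpn) (by simpa [two_mul] using h2p)
  simp [Finset.sum_Ico_eq_sum_range, h1]
end

section
/- There are no natural numbers k > 1 and n > 1 satisfying k! = 2^(3n - ε_n)·n! where ε_n is the parity of n, except none exist: the equation k! = 2^(3n-ε_n)·n! with k, n > 1 has no solutions. -/
theorem no_solution_factorial_eq (k n : ℕ) (hk : 1 < k) (hn : 1 < n) :
    Nat.factorial k ≠
      2 ^ (3 * n - (if Odd n then 1 else 0)) * Nat.factorial n := by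
  intro h
  set e := 3 * n - (if Odd n then 1 else 0) with he
  have he1 : 1 ≤ e := by
    rcases Nat.even_or_odd n with hp | hp
    · simp [he, Nat.not_odd_iff_even.mpr hp]; omega
    · simp [he, hp]; omega
  have hnk : n < k := by
    have hlt : Nat.factorial n < Nat.factorial k := by
      calc Nat.factorial n < 2 ^ e * Nat.factorial n := by
            have h2 : 2 ≤ 2 ^ e := by
              calc 2 = 2 ^ 1 := rfl
                _ ≤ 2 ^ e := Nat.pow_le_pow_right (by norm_num) he1
            nlinarith [Nat.factorial_pos n]
        _ = Nat.factorial k := h.symm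
    exact (Nat.factorial_lt (by omega)).mp hlt
  rcases eq_or_lt_of_le (Nat.succ_le_of_lt hnk) with hk1 | hk2
  · -- k = n + 1
    rw [← hk1, Nat.factorial_succ] at h
    have h' : (n + 1) * Nat.factorial n = 2 ^ e * Nat.factorial n := h
    have hsum : n + 1 = 2 ^ e := Nat.eq_of_mul_eq_mul_right (Nat.factorial_pos n) h'
    have hdvd2 : 2 ∣ n + 1 := by
      rw [hsum]
      exact dvd_pow_self 2 (by omega)
    have hodd : Odd n := by
      rcases Nat.even_or_odd n with hp | hp
      · exfalso; rcases hp with ⟨m, hm⟩; omega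
      · exact hp
    have he' : e = 3 * n - 1 := by simp [he, hodd]
    have h1 : n + 2 ≤ 3 * n - 1 := by omega
    have h2 : 2 ^ (n + 2) ≤ 2 ^ (3 * n - 1) := Nat.pow_le_pow_right (by norm_num) h1
    have h3 : n < 2 ^ n := Nat.lt_two_pow_self
    have h4 : 2 ^ (n + 2) = 4 * 2 ^ n := by ring
    rw [he'] at hsum
    omega
  · -- k ≥ n + 2
    have hdvd : Nat.factorial (n + 2) ∣ Nat.factorial k :=
      Nat.factorial_dvd_factorial (by omega)
    have hfac : Nat.factorial (n + 2) = Nat.factorial n * ((n + 1) * (n + 2)) := by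
      rw [Nat.factorial_succ, Nat.factorial_succ]; ring
    rw [hfac, h, mul_comm (2 ^ e)] at hdvd
    have hdvd' : (n + 1) * (n + 2) ∣ 2 ^ e :=
      (Nat.mul_dvd_mul_iff_left (Nat.factorial_pos n)).mp hdvd
    -- one of n+1, n+2 is odd and ≥ 3
    obtain ⟨d, hd3, hdodd, hdd⟩ : ∃ d, 3 ≤ d ∧ Odd d ∧ d ∣ 2 ^ e := by
      rcases Nat.even_or_odd n with hp | hp
      · exact ⟨n + 1, by omega, by rcases hp with ⟨m, hm⟩; exact ⟨m, by omega⟩,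
          dvd_trans (Dvd.intro _ rfl) hdvd'⟩
      · exact ⟨n + 2, by omega, by rcases hp with ⟨m, hm⟩; exact ⟨m + 1, by omega⟩,
          dvd_trans (Dvd.intro_left _ rfl) hdvd'⟩
    have hcop : Nat.Coprime d 2 :=
      ((Nat.prime_two.coprime_iff_not_dvd).mpr (by rw [Nat.odd_iff] at hdodd; omega)).symm
    have : d = 1 := (hcop.pow_right e).eq_one_of_dvd hdd
    omega
end

section
/- For natural numbers k, m̂ > 1, the equation k! = 2^(m̂ - ε_{m̂})·m̂! holds if and only if (k, m̂) = (4, 3), where ε_{m̂} is the parity of m̂. -/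
lemma aux_pow_lt (m : ℕ) (hm : 4 ≤ m) : m + 1 < 2 ^ (m - 1) := by
  induction m with
  | zero => omega
  | succ n ih =>
    rcases Nat.lt_or_ge n 4 with h | h
    · interval_cases n <;> omega
    · have h1 := ih (by omega)
      have h2 : 2 ^ (n + 1 - 1) = 2 * 2 ^ (n - 1) := by
        rw [← pow_succ']
        congr 1
        omega
      omega

theorem factorial_eq_two_pow_mul_factorial_iff (k m : ℕ) (hk : 1 < k) (hm : 1 < m) :
    Nat.factorial k = 2 ^ (m - (if Odd m then 1 else 0)) * Nat.factorial m ↔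
      k = 4 ∧ m = 3 := by
  constructor
  · intro h
    set e := m - (if Odd m then 1 else 0) with he
    have hmpos : 0 < m.factorial := Nat.factorial_pos m
    have he1 : m - 1 ≤ e := by
      rcases Nat.even_or_odd m with h' | h'
      · simp [he, Nat.not_odd_iff_even.mpr h']
      · simp [he, h']
    have he2 : 1 ≤ e := by omega
    have h2e : 2 ≤ 2 ^ e := by
      calc 2 = 2 ^ 1 := rfl
        _ ≤ 2 ^ e := Nat.pow_le_pow_right (by norm_num) he2
    have hkm : m < k := by
      by_contra hle
      push_neg at hle
      have h1 : k.factorial ≤ m.factorial := Nat.factorial_le hle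
      nlinarith [hmpos]
    have hk2 : k ≤ m + 1 := by
      by_contra hgt
      push_neg at hgt
      have hdvd : (m + 2).factorial ∣ k.factorial := Nat.factorial_dvd_factorial hgt
      rw [h] at hdvd
      have hfac : (m + 2).factorial = (m + 2) * (m + 1) * m.factorial := by
        rw [show m + 2 = (m + 1) + 1 from rfl, Nat.factorial_succ, Nat.factorial_succ]
        ring
      rw [hfac] at hdvd
      have hdvd2 : (m + 2) * (m + 1) ∣ 2 ^ e :=
        (Nat.mul_dvd_mul_iff_right hmpos).mp hdvd
      rcases Nat.even_or_odd m with hme | hmo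
      · have hd : (m + 1) ∣ 2 ^ e := (dvd_mul_left (m + 1) (m + 2)).trans hdvd2
        have hodd : Odd (m + 1) := Even.add_one hme
        have hcop : Nat.Coprime (m + 1) (2 ^ e) :=
          Nat.Coprime.pow_right e (Nat.coprime_two_right.mpr hodd)
        exact absurd (Nat.Coprime.eq_one_of_dvd hcop hd) (by omega)
      · have hd : (m + 2) ∣ 2 ^ e := (dvd_mul_right (m + 2) (m + 1)).trans hdvd2
        have hodd : Odd (m + 2) := by
          rcases hmo with ⟨t, ht⟩; exact ⟨t + 1, by omega⟩
        have hcop : Nat.Coprime (m + 2) (2 ^ e) :=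
          Nat.Coprime.pow_right e (Nat.coprime_two_right.mpr hodd)
        exact absurd (Nat.Coprime.eq_one_of_dvd hcop hd) (by omega)
    have hkeq : k = m + 1 := by omega
    subst hkeq
    rw [Nat.factorial_succ] at h
    have hme : m + 1 = 2 ^ e := Nat.eq_of_mul_eq_mul_right hmpos h
    rcases Nat.lt_or_ge m 4 with hlt | hge
    · interval_cases m
      · norm_num [he, Nat.odd_iff] at hme
      · exact ⟨rfl, rfl⟩
    · exfalso
      have h1 : m + 1 < 2 ^ (m - 1) := aux_pow_lt m hge
      have h2 : 2 ^ (m - 1) ≤ 2 ^ e := Nat.pow_le_pow_right (by norm_num) he1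
      omega
  · rintro ⟨rfl, rfl⟩
    decide
end

section
/- For natural numbers m̂, m̂' > 1, if 2^(m̂ - ε_{m̂})·m̂! = 2^(m̂' - ε_{m̂'})·m̂'! then m̂ = m̂', where ε_j is the parity of j. -/
private def gfun (m : ℕ) : ℕ := 2 ^ (m - (if Odd m then 1 else 0)) * Nat.factorial m

private lemma gfun_pos (m : ℕ) : 0 < gfun m :=
  Nat.mul_pos (Nat.pow_pos (by norm_num)) (Nat.factorial_pos m)

private lemma gfun_step (m : ℕ) (hm : 1 ≤ m) : gfun m < gfun (m + 1) := by
  unfold gfun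
  rcases Nat.even_or_odd m with he | ho
  · have h1 : ¬ Odd m := Nat.not_odd_iff_even.mpr he
    have h2 : Odd (m + 1) := Even.add_one he
    simp only [h1, h2, if_true, if_false, Nat.sub_zero, Nat.add_sub_cancel,
      Nat.factorial_succ]
    calc 2 ^ m * m.factorial < 2 ^ m * ((m+1) * m.factorial) := by
          have h3 : m.factorial < (m+1) * m.factorial :=
            (Nat.lt_mul_iff_one_lt_left (Nat.factorial_pos m)).mpr (by omega)
          exact mul_lt_mul_of_pos_left h3 (Nat.pow_pos (by norm_num))
      _ = 2 ^ m * (m+1) * m.factorial := by ring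
      _ = 2 ^ m * ((m + 1) * m.factorial) := by ring
  · have h2 : ¬ Odd (m + 1) := Nat.not_odd_iff_even.mpr (Odd.add_one ho)
    simp only [ho, h2, if_true, if_false, Nat.sub_zero, Nat.factorial_succ]
    have : 2 ^ (m + 1) = 4 * 2 ^ (m - 1) := by
      have : m - 1 + 2 = m + 1 := by omega
      rw [← this, pow_add]; ring
    rw [this]
    calc 2 ^ (m - 1) * m.factorial < 2 ^ (m-1) * (4 * ((m+1) * m.factorial)) := by
          have hh : m.factorial < 4 * ((m+1) * m.factorial) :=
            calc m.factorial = 1 * m.factorial := (one_mul _).symm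
              _ < 4 * (m+1) * m.factorial :=
                  mul_lt_mul_of_pos_right (by omega) (Nat.factorial_pos m)
              _ = 4 * ((m+1) * m.factorial) := by ring
          exact mul_lt_mul_of_pos_left hh (Nat.pow_pos (by norm_num))
      _ = 4 * 2 ^ (m - 1) * ((m + 1) * m.factorial) := by ring

private lemma gfun_mono {a b : ℕ} (ha : 1 ≤ a) (hab : a < b) : gfun a < gfun b := by
  induction b with
  | zero => omega
  | succ n ih =>
    rcases Nat.lt_or_ge a n with h | h
    · exact lt_trans (ih h) (gfun_step n (by omega))
    · have : a = n := by omega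
      subst this
      exact gfun_step a ha

theorem two_pow_mul_factorial_injective (m m' : ℕ) (hm : 1 < m) (hm' : 1 < m')
    (h : 2 ^ (m - (if Odd m then 1 else 0)) * Nat.factorial m =
      2 ^ (m' - (if Odd m' then 1 else 0)) * Nat.factorial m') :
    m = m' := by
  have hg : gfun m = gfun m' := h
  rcases lt_trichotomy m m' with hlt | heq | hgt
  · exact absurd hg (Nat.ne_of_lt (gfun_mono (by omega) hlt))
  · exact heq
  · exact absurd hg.symm (Nat.ne_of_lt (gfun_mono (by omega) hgt))
end

section
/- Let R = (Z/2Z)^n be the product of n copies of the field with two elements, n ≥ 2. Then the automorphism group of the Jacobson graph of R is isomorphic to the symmetric group S_n, acting by permuting coordinates. -/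
/-- The Jacobson graph of `(Z/2)^n`: vertices are the nonzero elements,
two distinct vertices are adjacent iff `1 - x*y` is not a unit. -/
def jacGraph2 (n : ℕ) : SimpleGraph {x : Fin n → ZMod 2 // x ≠ 0} where
  Adj x y := x ≠ y ∧ ¬ IsUnit (1 - (x : Fin n → ZMod 2) * y)
  symm := by
    constructor
    rintro x y ⟨hxy, hu⟩
    exact ⟨hxy.symm, by rwa [mul_comm]⟩
  loopless := by constructor; rintro x ⟨h, _⟩; exact h rfl

/-- The automorphism group of a simple graph. -/
instance graphAutGroup {V : Type*} (G : SimpleGraph V) : Group (G ≃g G) where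
  mul f g := g.trans f
  one := SimpleGraph.Iso.refl
  inv f := f.symm
  mul_assoc f g h := rfl
  one_mul f := rfl
  mul_one f := rfl
  inv_mul_cancel f := by
    ext x
    exact f.symm_apply_apply x

namespace JacAux

variable {n : ℕ}

abbrev V (n : ℕ) := {x : Fin n → ZMod 2 // x ≠ 0}

lemma zmod2_cases (a : ZMod 2) : a = 0 ∨ a = 1 := by revert a; decide

lemma pi_isUnit {ι M : Type*} [CommMonoid M] (f : ι → M) :
    IsUnit f ↔ ∀ i, IsUnit (f i) := by
  constructor
  · intro h i
    exact h.map (Pi.evalMonoidHom (fun _ => M) i)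
  · intro h
    rw [isUnit_iff_exists_inv]
    refine ⟨fun i => ((h i).unit⁻¹ : Mˣ), ?_⟩
    funext i
    simp

/-- the "share a 1" relation -/
def S (x y : V n) : Prop :=
  ∃ i, (x : Fin n → ZMod 2) i = 1 ∧ (y : Fin n → ZMod 2) i = 1

lemma adj_iff (x y : V n) : (jacGraph2 n).Adj x y ↔ x ≠ y ∧ S x y := by
  constructor
  · rintro ⟨hne, hu⟩
    refine ⟨hne, ?_⟩
    rw [pi_isUnit] at hu
    push_neg at hu
    obtain ⟨i, hi⟩ := hu
    rw [isUnit_iff_ne_zero] at hi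
    push_neg at hi
    simp only [Pi.sub_apply, Pi.one_apply, Pi.mul_apply, sub_eq_zero] at hi
    have h1 : (x : Fin n → ZMod 2) i = 1 ∧ (y : Fin n → ZMod 2) i = 1 := by
      rcases zmod2_cases ((x : Fin n → ZMod 2) i) with h | h <;>
      rcases zmod2_cases ((y : Fin n → ZMod 2) i) with h' | h' <;>
      simp [h, h'] at hi ⊢
    exact ⟨i, h1⟩
  · rintro ⟨hne, i, h1, h2⟩
    refine ⟨hne, ?_⟩
    rw [pi_isUnit]
    push_neg
    refine ⟨i, ?_⟩
    rw [isUnit_iff_ne_zero]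
    push_neg
    simp [h1, h2]

lemma S_self (x : V n) : S x x := by
  have hx := x.2
  rw [Function.ne_iff] at hx
  obtain ⟨i, hi⟩ := hx
  rcases zmod2_cases ((x : Fin n → ZMod 2) i) with h | h
  · exact absurd h hi
  · exact ⟨i, h, h⟩

lemma S_iff (x z : V n) : S x z ↔ (z = x ∨ (jacGraph2 n).Adj x z) := by
  constructor
  · intro h
    by_cases hz : z = x
    · exact Or.inl hz
    · exact Or.inr ((adj_iff x z).2 ⟨fun he => hz he.symm, h⟩)
  · rintro (rfl | h)
    · exact S_self z
    · exact ((adj_iff x z).1 h).2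

/-- inclusion of supports -/
def le' (x y : V n) : Prop :=
  ∀ i, (x : Fin n → ZMod 2) i = 1 → (y : Fin n → ZMod 2) i = 1

def e (i : Fin n) : V n :=
  ⟨Pi.single i 1, by
    intro h
    have := congrFun h i
    simp at this⟩

lemma e_apply {i j : Fin n} : (e i : Fin n → ZMod 2) j = 1 ↔ j = i := by
  by_cases h : j = i <;> simp [e, Pi.single_apply, h]

lemma e_self (i : Fin n) : (e i : Fin n → ZMod 2) i = 1 := e_apply.2 rfl

lemma e_injective : Function.Injective (e (n := n)) := by
  intro i j h
  have h1 : (e i : Fin n → ZMod 2) i = 1 := e_self i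
  rw [h] at h1
  exact e_apply.1 h1

lemma e_le' {i : Fin n} {x : V n} : le' (e i) x ↔ (x : Fin n → ZMod 2) i = 1 := by
  constructor
  · intro h; exact h i (e_self i)
  · intro h j hj
    rw [e_apply.1 hj]; exact h

lemma ext' {x y : V n}
    (h : ∀ i, (x : Fin n → ZMod 2) i = 1 ↔ (y : Fin n → ZMod 2) i = 1) : x = y := by
  apply Subtype.ext
  funext i
  rcases zmod2_cases ((x : Fin n → ZMod 2) i) with hx | hx <;>
  rcases zmod2_cases ((y : Fin n → ZMod 2) i) with hy | hy
  · rw [hx, hy]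
  · exact absurd (hx ▸ (h i).2 hy) (by decide)
  · exact absurd (hy ▸ (h i).1 hx) (by decide)
  · rw [hx, hy]

lemma le'_iff (x y : V n) : le' x y ↔ ∀ z, S x z → S y z := by
  constructor
  · rintro h z ⟨i, h1, h2⟩
    exact ⟨i, h i h1, h2⟩
  · intro h i hx
    have hS : S y (e i) := h (e i) ⟨i, hx, e_self i⟩
    obtain ⟨j, hy, hej⟩ := hS
    rwa [e_apply.1 hej] at hy

section iso

variable (φ : jacGraph2 n ≃g jacGraph2 n)

lemma iso_S (x z : V n) : S (φ x) (φ z) ↔ S x z := by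
  rw [S_iff, S_iff]
  constructor
  · rintro (h | h)
    · exact Or.inl (φ.injective h)
    · exact Or.inr (φ.map_adj_iff.1 h)
  · rintro (rfl | h)
    · exact Or.inl rfl
    · exact Or.inr (φ.map_adj_iff.2 h)

lemma iso_le' (x y : V n) : le' (φ x) (φ y) ↔ le' x y := by
  rw [le'_iff, le'_iff]
  constructor
  · intro h z hz
    have := h (φ z) ((iso_S φ x z).2 hz)
    exact (iso_S φ y z).1 this
  · intro h z hz
    obtain ⟨w, rfl⟩ := φ.surjective z
    exact (iso_S φ y w).2 (h w ((iso_S φ x w).1 hz))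

/-- minimality of basis vectors -/
lemma le'_e {x : V n} {i : Fin n} (h : le' x (e i)) : x = e i := by
  have hx := S_self x
  obtain ⟨j, hj, -⟩ := hx
  have hji : j = i := e_apply.1 (h j hj)
  subst hji
  refine ext' fun k => ⟨fun hk => h k hk, fun hk => ?_⟩
  rwa [e_apply.1 hk]

lemma exists_e (i : Fin n) : ∃ j, φ (e i) = e j := by
  obtain ⟨j, hj, -⟩ := S_self (φ (e i))
  refine ⟨j, ?_⟩
  have h1 : le' (e j) (φ (e i)) := e_le'.2 hj
  have h2 : le' (φ.symm (e j)) (e i) := by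
    have := (iso_le' φ (φ.symm (e j)) (e i)).1
    apply this
    rwa [φ.apply_symm_apply]
  have h3 : φ.symm (e j) = e i := le'_e h2
  rw [← h3, φ.apply_symm_apply]

noncomputable def f (i : Fin n) : Fin n := (exists_e φ i).choose

lemma f_spec (i : Fin n) : φ (e i) = e (f φ i) := (exists_e φ i).choose_spec

lemma f_symm_f (i : Fin n) : f φ.symm (f φ i) = i := by
  apply e_injective
  rw [← f_spec φ.symm, ← f_spec φ, φ.symm_apply_apply]

lemma f_f_symm (i : Fin n) : f φ (f φ.symm i) = i := by
  apply e_injective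
  rw [← f_spec φ, ← f_spec φ.symm, φ.apply_symm_apply]

noncomputable def F : Equiv.Perm (Fin n) :=
  ⟨f φ, f φ.symm, f_symm_f φ, f_f_symm φ⟩

lemma phi_apply (x : V n) (i : Fin n) :
    ((φ x : V n) : Fin n → ZMod 2) (f φ i) = 1 ↔ (x : Fin n → ZMod 2) i = 1 := by
  rw [← e_le', ← e_le' (i := i), ← f_spec φ]
  exact iso_le' φ (e i) x

end iso

lemma f_unique (φ : jacGraph2 n ≃g jacGraph2 n) {g : Fin n → Fin n}
    (h : ∀ i, φ (e i) = e (g i)) : ∀ i, f φ i = g i := by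
  intro i
  apply e_injective
  rw [← f_spec φ, h i]

noncomputable def Fhom : (jacGraph2 n ≃g jacGraph2 n) →* Equiv.Perm (Fin n) :=
  MonoidHom.mk' (fun φ => F φ) (by
    intro φ ψ
    refine Equiv.ext fun i => ?_
    show f (φ * ψ) i = f φ (f ψ i)
    apply e_injective
    rw [← f_spec (φ * ψ)]
    show φ (ψ (e i)) = _
    rw [f_spec ψ, f_spec φ])

lemma Fhom_injective : Function.Injective (Fhom (n := n)) := by
  rw [injective_iff_map_eq_one]
  intro φ hφ
  have hf : ∀ i, f φ i = i := fun i => Equiv.ext_iff.mp hφ i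
  have hx : ∀ x : V n, φ x = x := by
    intro x
    refine ext' fun i => ?_
    have := phi_apply φ x i
    rwa [hf i] at this
  ext x
  rw [hx x]
  rfl

def permEquiv (σ : Equiv.Perm (Fin n)) : V n ≃ V n where
  toFun x := ⟨(x : Fin n → ZMod 2) ∘ σ.symm, by
    intro h; apply x.2; funext i
    have := congrFun h (σ i); simpa using this⟩
  invFun x := ⟨(x : Fin n → ZMod 2) ∘ σ, by
    intro h; apply x.2; funext i
    have := congrFun h (σ.symm i); simpa using this⟩
  left_inv x := Subtype.ext (funext fun i => by simp)
  right_inv x := Subtype.ext (funext fun i => by simp)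

def permIso (σ : Equiv.Perm (Fin n)) : jacGraph2 n ≃g jacGraph2 n where
  toEquiv := permEquiv σ
  map_rel_iff' := by
    intro x y
    rw [adj_iff, adj_iff]
    constructor
    · rintro ⟨hne, i, h1, h2⟩
      refine ⟨fun h => hne (by rw [h]), σ.symm i, h1, h2⟩
    · rintro ⟨hne, i, h1, h2⟩
      refine ⟨fun h => hne ((permEquiv σ).injective h), σ i, ?_, ?_⟩ <;>
        simpa [permEquiv]

lemma permIso_apply (σ : Equiv.Perm (Fin n)) (x : V n) (j : Fin n) :
    ((permIso σ) x : Fin n → ZMod 2) j = (x : Fin n → ZMod 2) (σ.symm j) := rfl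

lemma permIso_e (σ : Equiv.Perm (Fin n)) (i : Fin n) :
    (permIso σ) (e i) = e (σ i) := by
  refine ext' fun j => ?_
  rw [permIso_apply, e_apply, e_apply, Equiv.symm_apply_eq]

lemma Fhom_surjective : Function.Surjective (Fhom (n := n)) := by
  intro σ
  refine ⟨permIso σ, ?_⟩
  refine Equiv.ext fun i => ?_
  exact f_unique (permIso σ) (permIso_e σ) i

end JacAux

/-- The automorphism group of the Jacobson graph of `(Z/2)^n` is the
symmetric group `S_n`, acting by permuting coordinates. -/
theorem jacGraph2_aut (n : ℕ) (hn : 2 ≤ n) :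
    Nonempty ((jacGraph2 n ≃g jacGraph2 n) ≃* Equiv.Perm (Fin n)) :=
  ⟨MulEquiv.ofBijective JacAux.Fhom ⟨JacAux.Fhom_injective, JacAux.Fhom_surjective⟩⟩
end
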